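/- Let (Ω, P) be a probability space, {A_n} a sequence of events with P(A_n) > 0 and ∑_{n=1}^∞ P(A_n) = ∞. Set α_n = (∑_{i=1}^n 1_{A_i}) / (∑_{i=1}^n P(A_i)). Then for every p ∈ (0,1), P(limsup A_n) ≥ (limsup_{n→∞} E[α_n^p])^{1/(1−p)}. -/

import Mathlib

open MeasureTheory Filter Set Topology

lemma MS_rpow_add_le {a b p : ℝ} (ha : 0 ≤ a) (hb : 0 ≤ b) (hp : 0 ≤ p) (hp1 : p ≤ 1) :
    (a + b) ^ p ≤ a ^ p + b ^ p := by
  have h := NNReal.rpow_add_le_add_rpow a.toNNReal b.toNNReal hp hp1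
  have := NNReal.coe_le_coe.2 h
  push_cast at this
  rwa [Real.coe_toNNReal _ ha, Real.coe_toNNReal _ hb] at this

lemma MS_rpow_le_one_add {x p : ℝ} (hx : 0 ≤ x) (hp : 0 < p) (hp1 : p ≤ 1) :
    x ^ p ≤ 1 + x := by
  rcases le_or_gt x 1 with h | h
  · have : x ^ p ≤ 1 := Real.rpow_le_one hx h hp.le
    linarith
  · have : x ^ p ≤ x ^ (1:ℝ) := Real.rpow_le_rpow_of_exponent_le h.le hp1
    rw [Real.rpow_one] at this; linarith

lemma MS_bernoulli {x p : ℝ} (hx : 0 ≤ x) (hp : 0 ≤ p) (hp1 : p ≤ 1) :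
    x ^ p ≤ 1 + p * (x - 1) := by
  have h := rpow_one_add_le_one_add_mul_self (s := x - 1) (by linarith) hp hp1
  simpa using h

theorem mori_szekely_bound_lt_one {Ω : Type*} [MeasurableSpace Ω] (μ : Measure Ω)
    [IsProbabilityMeasure μ] (A : ℕ → Set Ω) (hA : ∀ n, MeasurableSet (A n))
    (hpos : ∀ n, 0 < μ (A n))
    (hdiv : Tendsto (fun n => ∑ k ∈ Finset.range n, (μ (A k)).toReal) atTop atTop)
    (p : ℝ) (hp : p ∈ Set.Ioo (0 : ℝ) 1) :
    (μ (Filter.limsup A atTop)).toReal ≥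
      (Filter.limsup (fun n =>
          ∫ ω, ((∑ i ∈ Finset.range n, (A i).indicator (1 : Ω → ℝ) ω) /
              (∑ i ∈ Finset.range n, (μ (A i)).toReal)) ^ p ∂μ) atTop) ^ (1 / (1 - p)) := by
  obtain ⟨hp0, hp1⟩ := hp
  set D : ℕ → ℝ := fun n => ∑ k ∈ Finset.range n, (μ (A k)).toReal with hD
  set S : ℕ → Ω → ℝ := fun n ω => ∑ i ∈ Finset.range n, (A i).indicator (1 : Ω → ℝ) ω with hS
  set F : ℕ → ℝ := fun n => ∫ ω, (S n ω / D n) ^ p ∂μ with hF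
  -- basic facts
  have hind0 : ∀ i (ω : Ω), 0 ≤ (A i).indicator (1 : Ω → ℝ) ω := fun i ω =>
    Set.indicator_nonneg (fun _ _ => zero_le_one) ω
  have hind1 : ∀ i (ω : Ω), (A i).indicator (1 : Ω → ℝ) ω ≤ 1 := fun i ω =>
    Set.indicator_le_self' (fun _ _ => zero_le_one) ω |>.trans (le_refl _) |>.trans_eq rfl
  have hSnn : ∀ n ω, 0 ≤ S n ω := fun n ω => Finset.sum_nonneg fun i _ => hind0 i ω
  have hD0 : ∀ n, 0 ≤ D n := fun n => Finset.sum_nonneg fun k _ => ENNReal.toReal_nonneg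
  have hDpos : ∀ n, 1 ≤ n → 0 < D n := by
    intro n hn
    have h0 : (0:ℝ) < (μ (A 0)).toReal :=
      ENNReal.toReal_pos (hpos 0).ne' (measure_ne_top μ _)
    have : (μ (A 0)).toReal ≤ D n :=
      Finset.single_le_sum (f := fun k => (μ (A k)).toReal)
        (fun k _ => ENNReal.toReal_nonneg) (Finset.mem_range.2 hn)
    linarith
  have hSmeas : ∀ n, Measurable (S n) := fun n =>
    Finset.measurable_sum _ fun i _ => (measurable_const.indicator (hA i))
  have hSint : ∀ n, Integrable (S n) μ := fun n =>
    integrable_finset_sum _ fun i _ => (integrable_const (1:ℝ)).indicator (hA i)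
  have hSintegral : ∀ n, ∫ ω, S n ω ∂μ = D n := by
    intro n
    show ∫ ω, ∑ i ∈ Finset.range n, (A i).indicator (1 : Ω → ℝ) ω ∂μ = D n
    rw [integral_finset_sum (μ := μ) (Finset.range n)
      (f := fun i (ω : Ω) => (A i).indicator (1 : Ω → ℝ) ω)
      fun i _ => (integrable_const (1:ℝ)).indicator (hA i)]
    exact Finset.sum_congr rfl fun i _ => integral_indicator_one (hA i)
  have hfnn : ∀ n ω, 0 ≤ (S n ω / D n) ^ p := fun n ω =>
    Real.rpow_nonneg (div_nonneg (hSnn n ω) (hD0 n)) p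
  have hfle : ∀ n ω, (S n ω / D n) ^ p ≤ 1 + S n ω / D n := fun n ω =>
    MS_rpow_le_one_add (div_nonneg (hSnn n ω) (hD0 n)) hp0 hp1.le
  have hfmeas : ∀ n, Measurable fun ω => (S n ω / D n) ^ p := fun n =>
    ((hSmeas n).div_const _).pow_const p |>.mono le_rfl le_rfl
  have hInt : ∀ n, Integrable (fun ω => (S n ω / D n) ^ p) μ := by
    intro n
    have hg1 : Integrable (fun ω => 1 + S n ω / D n) μ :=
      (integrable_const (1:ℝ)).add ((hSint n).div_const (D n))
    refine Integrable.mono' hg1 ((hfmeas n).aestronglyMeasurable) ?_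
    filter_upwards with ω
    rw [Real.norm_of_nonneg (hfnn n ω)]
    exact hfle n ω
  have hSDint : ∀ n, ∫ ω, S n ω / D n ∂μ = D n / D n := by
    intro n
    rw [div_eq_mul_inv (D n) (D n), ← hSintegral n, ← integral_mul_const]
    simp [div_eq_mul_inv]
  have hF0 : ∀ n, 0 ≤ F n := fun n => integral_nonneg fun ω => hfnn n ω
  have hF2 : ∀ n, F n ≤ 2 := by
    intro n
    have h1 : F n ≤ ∫ ω, (1 + S n ω / D n) ∂μ :=
      integral_mono (hInt n) ((integrable_const (1:ℝ)).add ((hSint n).div_const (D n)))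
        fun ω => hfle n ω
    have h2 : ∫ ω, (1 + S n ω / D n) ∂μ = 1 + D n / D n := by
      rw [integral_add (integrable_const _) ((hSint n).div_const (D n)), integral_const,
        hSDint n]
      simp
    have h3 : D n / D n ≤ 1 := by
      rcases eq_or_lt_of_le (hD0 n) with h | h
      · simp [← h]
      · simp [div_self h.ne']
    linarith
  have hFbdd : IsBoundedUnder (· ≤ ·) atTop F := ⟨2, Filter.eventually_map.2 <|
    Filter.Eventually.of_forall hF2⟩
  have hFcobdd : IsCoboundedUnder (· ≤ ·) atTop F :=
    isCoboundedUnder_le_of_le _ hF0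
  -- the tail unions
  set B : ℕ → Set Ω := fun m => ⋃ i, ⋃ (_ : m ≤ i), A i with hB
  have hBmeas : ∀ m, MeasurableSet (B m) := fun m =>
    MeasurableSet.iUnion fun i => MeasurableSet.iUnion fun _ => hA i
  have hBanti : Antitone B := by
    intro m m' h
    refine Set.iUnion₂_subset fun i hi => ?_
    exact Set.subset_biUnion_of_mem (h.trans hi)
  set c : ℕ → ℝ := fun m => (μ (B m)).toReal with hc
  have hcpos : ∀ m, 0 < c m := by
    intro m
    refine ENNReal.toReal_pos ?_ (measure_ne_top μ _)
    have : μ (A m) ≤ μ (B m) := measure_mono (Set.subset_iUnion₂ (s := fun i (_ : m ≤ i) => A i) m le_rfl)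
    exact fun h => (hpos m).ne' (le_antisymm (h ▸ this) zero_le)
  have hc1 : ∀ m, c m ≤ 1 := fun m => by
    simpa [hc] using ENNReal.toReal_mono (by simp) (prob_le_one (μ := μ) (s := B m))
  have hlimsupeq : Filter.limsup A atTop = ⋂ m, B m := by
    rw [limsup_eq_iInf_iSup_of_nat]; rfl
  set M : ℝ := (μ (Filter.limsup A atTop)).toReal with hM
  have hctend : Tendsto c atTop (𝓝 M) := by
    have h1 : Tendsto (μ ∘ B) atTop (𝓝 (μ (⋂ m, B m))) :=
      tendsto_measure_iInter_atTop (fun i => (hBmeas i).nullMeasurableSet) hBanti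
        ⟨0, measure_ne_top μ _⟩
    rw [← hlimsupeq] at h1
    exact (ENNReal.tendsto_toReal (measure_ne_top μ _)).comp h1
  -- key bound for each m
  have hkey : ∀ m : ℕ, Filter.limsup F atTop ≤ c m ^ (1 - p) := by
    intro m
    set cm := c m with hcm
    have hcmpos := hcpos m
    -- pointwise integral bound for n ≥ 1
    have hFbound : ∀ n, 1 ≤ n → F n ≤ ((m:ℝ) / D n) ^ p + cm ^ (1 - p) := by
      intro n hn
      have hDn := hDpos n hn
      -- truncated sum
      set T : Ω → ℝ := fun ω => ∑ i ∈ Finset.range n,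
        (if m ≤ i then (A i).indicator (1 : Ω → ℝ) ω else 0) with hT
      have hTnn : ∀ ω, 0 ≤ T ω := fun ω => Finset.sum_nonneg fun i _ => by
        split
        · exact hind0 i ω
        · exact le_rfl
      have hTleS : ∀ ω, T ω ≤ S n ω := fun ω => Finset.sum_le_sum fun i _ => by
        split
        · exact le_rfl
        · exact hind0 i ω
      have hSleT : ∀ ω, S n ω ≤ m + T ω := by
        intro ω
        have h1 : S n ω ≤ ∑ i ∈ Finset.range n,
            ((if i < m then (1:ℝ) else 0) + (if m ≤ i then (A i).indicator (1 : Ω → ℝ) ω else 0)) := by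
          refine Finset.sum_le_sum fun i _ => ?_
          by_cases h : i < m
          · simp [h, Nat.not_le.2 h, hind1 i ω]
          · simp [h, Nat.le_of_not_lt h]
        rw [Finset.sum_add_distrib] at h1
        have h2 : ∑ i ∈ Finset.range n, (if i < m then (1:ℝ) else 0) ≤ m := by
          rw [← Finset.sum_filter]
          have : ((Finset.range n).filter (· < m)) ⊆ Finset.range m := fun x hx =>
            Finset.mem_range.2 (Finset.mem_filter.1 hx).2
          calc (∑ _i ∈ (Finset.range n).filter (· < m), (1:ℝ))
              = ((Finset.range n).filter (· < m)).card := by simp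
            _ ≤ (Finset.range m).card := by exact_mod_cast Nat.cast_le.2 (Finset.card_le_card this)
            _ = m := by simp
        linarith
      have hTzero : ∀ ω, ω ∉ B m → T ω = 0 := by
        intro ω hω
        refine Finset.sum_eq_zero fun i _ => ?_
        split
        · rename_i h
          have : ω ∉ A i := fun hωi => hω (Set.mem_biUnion h hωi)
          simp [Set.indicator_of_notMem this]
        · rfl
      have hTint : Integrable T μ := integrable_finset_sum _ fun i _ => by
        split
        · exact (integrable_const (1:ℝ)).indicator (hA i)
        · exact integrable_zero _ _ _
      have hTintegral : ∫ ω, T ω ∂μ ≤ D n := by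
        rw [hT, integral_finset_sum _ fun i _ => ?_]
        · refine Finset.sum_le_sum fun i _ => ?_
          split
          · rw [integral_indicator_one (hA i)]; exact le_rfl
          · simp [ENNReal.toReal_nonneg]
        · split
          · exact (integrable_const (1:ℝ)).indicator (hA i)
          · exact integrable_zero _ _ _
      -- pointwise bound
      set g : Ω → ℝ := fun ω => ((m:ℝ) / D n) ^ p +
        ((1 - p) * cm ^ (-p) * (B m).indicator (1 : Ω → ℝ) ω + p * cm ^ (1 - p) * (S n ω / D n))
        with hg
      have hpointwise : ∀ ω, (S n ω / D n) ^ p ≤ g ω := by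
        intro ω
        have hβnn : 0 ≤ T ω / D n := div_nonneg (hTnn ω) hDn.le
        have h1 : S n ω / D n ≤ (m:ℝ) / D n + T ω / D n := by
          rw [← add_div]
          exact div_le_div_of_nonneg_right (hSleT ω) hDn.le |>.trans_eq rfl
        have h2 : (S n ω / D n) ^ p ≤ ((m:ℝ) / D n + T ω / D n) ^ p :=
          Real.rpow_le_rpow (div_nonneg (hSnn n ω) hDn.le) h1 hp0.le
        have h3 : ((m:ℝ) / D n + T ω / D n) ^ p ≤ ((m:ℝ) / D n) ^ p + (T ω / D n) ^ p :=
          MS_rpow_add_le (div_nonneg (by positivity) hDn.le) hβnn hp0.le hp1.le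
        have h4 : (T ω / D n) ^ p ≤
            (1 - p) * cm ^ (-p) * (B m).indicator (1 : Ω → ℝ) ω + p * cm ^ (1 - p) * (T ω / D n) := by
          by_cases hω : ω ∈ B m
          · rw [Set.indicator_of_mem hω, Pi.one_apply, mul_one]
            set β := T ω / D n
            have hb := MS_bernoulli (x := cm * β) (by positivity) hp0.le hp1.le
            have hid : cm ^ (-p) * cm = cm ^ (1 - p) := by
              rw [show (1:ℝ) - p = -p + 1 by ring, Real.rpow_add hcmpos, Real.rpow_one]
            have hβp : β ^ p = cm ^ (-p) * (cm * β) ^ p := by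
              rw [Real.mul_rpow hcmpos.le hβnn, ← mul_assoc, ← Real.rpow_add hcmpos]
              simp
            rw [hβp]
            calc cm ^ (-p) * (cm * β) ^ p ≤ cm ^ (-p) * (1 + p * (cm * β - 1)) := by
                  have : (0:ℝ) < cm ^ (-p) := Real.rpow_pos_of_pos hcmpos _
                  exact mul_le_mul_of_nonneg_left hb this.le
              _ = (1 - p) * cm ^ (-p) + p * (cm ^ (-p) * cm) * β := by ring
              _ = (1 - p) * cm ^ (-p) + p * cm ^ (1 - p) * β := by rw [hid]
          · rw [hTzero ω hω, Set.indicator_of_notMem hω, zero_div,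
              Real.zero_rpow hp0.ne']
            simp
        have h5 : p * cm ^ (1 - p) * (T ω / D n) ≤ p * cm ^ (1 - p) * (S n ω / D n) := by
          have : (0:ℝ) ≤ p * cm ^ (1 - p) := by positivity
          exact mul_le_mul_of_nonneg_left
            (div_le_div_of_nonneg_right (hTleS ω) hDn.le) this
        calc (S n ω / D n) ^ p ≤ ((m:ℝ) / D n) ^ p + (T ω / D n) ^ p := h2.trans h3
          _ ≤ g ω := by rw [hg]; dsimp only; linarith [h4, h5]
      have hgint : Integrable g μ := by
        refine (integrable_const _).add (Integrable.add ?_ ?_)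
        · exact (((integrable_const (1:ℝ)).indicator (hBmeas m)).const_mul _)
        · exact (((hSint n).div_const (D n)).const_mul _)
      have i1 : Integrable (fun ω => (1 - p) * cm ^ (-p) * (B m).indicator (1:Ω→ℝ) ω) μ :=
        (((integrable_const (1:ℝ)).indicator (hBmeas m)).const_mul _)
      have i2 : Integrable (fun ω => p * cm ^ (1 - p) * (S n ω / D n)) μ :=
        (((hSint n).div_const (D n)).const_mul _)
      have hid : cm ^ (-p) * cm = cm ^ (1 - p) := by
        rw [show (1:ℝ) - p = -p + 1 by ring, Real.rpow_add hcmpos, Real.rpow_one]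
      have einner : ∫ ω, ((1 - p) * cm ^ (-p) * (B m).indicator (1:Ω→ℝ) ω
            + p * cm ^ (1 - p) * (S n ω / D n)) ∂μ
          = (1 - p) * cm ^ (-p) * cm + p * cm ^ (1 - p) * (D n / D n) := by
        rw [integral_add i1 i2, integral_const_mul, integral_const_mul,
          integral_indicator_one (hBmeas m), hSDint n]; rfl
      have hgintegral : ∫ ω, g ω ∂μ ≤ ((m:ℝ) / D n) ^ p + cm ^ (1 - p) := by
        have etotal : ∫ ω, g ω ∂μ = ((m:ℝ) / D n) ^ p
            + ((1 - p) * cm ^ (-p) * cm + p * cm ^ (1 - p) * (D n / D n)) := by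
          have i12 : Integrable (fun ω => (1 - p) * cm ^ (-p) * (B m).indicator (1:Ω→ℝ) ω
              + p * cm ^ (1 - p) * (S n ω / D n)) μ := i1.add i2
          simp only [hg]
          rw [integral_add (integrable_const _) i12, integral_const, einner]
          simp
        rw [etotal, div_self (hDpos n hn).ne', mul_assoc (1-p), hid]
        nlinarith [Real.rpow_pos_of_pos hcmpos (1-p)]
      calc F n ≤ ∫ ω, g ω ∂μ := integral_mono (hInt n) hgint hpointwise
        _ ≤ _ := hgintegral
    -- pass to limsup
    have htend0 : Tendsto (fun n => ((m:ℝ) / D n) ^ p) atTop (𝓝 0) := by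
      have h1 : Tendsto (fun n => (m:ℝ) / D n) atTop (𝓝 0) :=
        Tendsto.div_atTop tendsto_const_nhds hdiv
      have h2 := h1.rpow_const (p := p) (Or.inr hp0.le)
      rwa [Real.zero_rpow hp0.ne'] at h2
    have htendRHS : Tendsto (fun n => ((m:ℝ) / D n) ^ p + cm ^ (1 - p)) atTop
        (𝓝 (cm ^ (1 - p))) := by
      simpa using htend0.add_const (cm ^ (1 - p))
    have hEv : F ≤ᶠ[atTop] fun n => ((m:ℝ) / D n) ^ p + cm ^ (1 - p) := by
      filter_upwards [Filter.eventually_ge_atTop 1] with n hn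
      exact hFbound n hn
    calc Filter.limsup F atTop
        ≤ Filter.limsup (fun n => ((m:ℝ) / D n) ^ p + cm ^ (1 - p)) atTop :=
          limsup_le_limsup hEv hFcobdd htendRHS.isBoundedUnder_le
      _ = cm ^ (1 - p) := htendRHS.limsup_eq
  -- conclude
  have hLM : Filter.limsup F atTop ≤ M ^ (1 - p) := by
    have h1 : Tendsto (fun m => c m ^ (1 - p)) atTop (𝓝 (M ^ (1 - p))) :=
      hctend.rpow_const (Or.inr (by linarith))
    exact ge_of_tendsto h1 (Filter.Eventually.of_forall hkey)
  have hL0 : 0 ≤ Filter.limsup F atTop :=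
    le_limsup_of_frequently_le (Filter.Eventually.of_forall hF0).frequently hFbdd
  have hM0 : 0 ≤ M := ENNReal.toReal_nonneg
  have hfinal : (Filter.limsup F atTop) ^ (1 / (1 - p)) ≤ M := by
    calc (Filter.limsup F atTop) ^ (1 / (1 - p))
        ≤ (M ^ (1 - p)) ^ (1 / (1 - p)) :=
          Real.rpow_le_rpow hL0 hLM (by
            have h : (0:ℝ) < 1 - p := by linarith
            positivity)
      _ = M ^ ((1 - p) * (1 / (1 - p))) := by rw [← Real.rpow_mul hM0]
      _ = M := by
          rw [mul_one_div, div_self (by linarith : (1:ℝ) - p ≠ 0), Real.rpow_one]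
  exact hfinal
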